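/- Let T be a bounded linear operator on a complex Banach space X, and suppose that for every nonempty relatively open subset U of the spectrum σ(T), the glocal spectral subspace 𝒳_T(closure(U)) is dense in X. Then the local spectrum of the adjoint satisfies σ_{T*}(x) = σ(T*) for every nonzero x ∈ X*. -/

import Mathlib

set_option synthInstance.maxHeartbeats 1000000
set_option maxHeartbeats 2000000
set_option linter.unusedSectionVars false


open Set Filter Topology Bornology Complex

noncomputable section




variable {X : Type*} [NormedAddCommGroup X] [NormedSpace ℂ X]

/-- The glocal spectral subspace `𝒳_T(F)` of a bounded operator `T`. -/
def glocalSubspace (T : X →L[ℂ] X) (F : Set ℂ) : Set X :=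
  {x | ∃ f : ℂ → X, AnalyticOnNhd ℂ f Fᶜ ∧ ∀ z ∈ Fᶜ, T (f z) - z • f z = x}

/-- The local resolvent set `ρ_T(x)`. -/
def localResolventSet (T : X →L[ℂ] X) (x : X) : Set ℂ :=
  ⋃₀ {U : Set ℂ | IsOpen U ∧ ∃ f : ℂ → X, AnalyticOnNhd ℂ f U ∧ ∀ z ∈ U, T (f z) - z • f z = x}

/-- The local spectrum `σ_T(x)`. -/
def localSpectrum (T : X →L[ℂ] X) (x : X) : Set ℂ := (localResolventSet T x)ᶜ

/-- The local spectral subspace `X_T(F)`. -/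
def localSubspace (T : X →L[ℂ] X) (F : Set ℂ) : Set X := {x | localSpectrum T x ⊆ F}

/-- Dunford's property (C). -/
def HasPropertyC (T : X →L[ℂ] X) : Prop :=
  ∀ F : Set ℂ, IsClosed F → IsClosed (localSubspace T F)

/-- The single-valued extension property. -/
def HasSVEP (T : X →L[ℂ] X) : Prop :=
  ∀ U : Set ℂ, IsOpen U → ∀ f : ℂ → X, AnalyticOnNhd ℂ f U →
    (∀ z ∈ U, T (f z) - z • f z = 0) → ∀ z ∈ U, f z = 0

/-- The point spectrum of an operator. -/
def pointSpectrum (T : X →L[ℂ] X) : Set ℂ := {μ : ℂ | ∃ x : X, x ≠ 0 ∧ T x = μ • x}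

/-- The local spectral radius `r_T(x) = limsup_n ‖Tⁿx‖^(1/n)`. -/
def localSpectralRadius (T : X →L[ℂ] X) (x : X) : ℝ :=
  Filter.limsup (fun n : ℕ => ‖(T ^ n) x‖ ^ (1 / (n : ℝ))) Filter.atTop

/-- The adjoint operator `T*` acting on the dual space `X*`. -/
def dualOp (T : X →L[ℂ] X) : StrongDual ℂ X →L[ℂ] StrongDual ℂ X :=
  (ContinuousLinearMap.compL ℂ X X ℂ).flip T

/-- Restriction of an operator to an invariant subspace. -/
def restrictOp (T : X →L[ℂ] X) (M : Submodule ℂ X) (h : ∀ x ∈ M, T x ∈ M) : M →L[ℂ] M :=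
  (T.comp M.subtypeL).codRestrict M (fun x => h x.1 x.2)

/-- The full spectrum `η(K)`: the union of `K` with all the bounded connected
components of its complement. -/
def fullSpectrum (K : Set ℂ) : Set ℂ :=
  K ∪ {z : ℂ | z ∉ K ∧ Bornology.IsBounded (connectedComponentIn Kᶜ z)}

/-- `U` is a nonempty relatively open subset of `σ(T)`. -/
def RelativelyOpenInSpectrum (T : X →L[ℂ] X) (U : Set ℂ) : Prop :=
  U.Nonempty ∧ ∃ V : Set ℂ, IsOpen V ∧ U = spectrum ℂ T ∩ V

lemma dualOp_apply (T : X →L[ℂ] X) (f : StrongDual ℂ X) (y : X) :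
    dualOp T f y = f (T y) := rfl

lemma dualOp_one : dualOp (1 : X →L[ℂ] X) = 1 := by ext f y; rfl

lemma dualOp_mul (A B : X →L[ℂ] X) : dualOp (A * B) = dualOp B * dualOp A := by ext f y; rfl

lemma dualOp_algebraMap_sub (z : ℂ) (T : X →L[ℂ] X) :
    dualOp (algebraMap ℂ (X →L[ℂ] X) z - T)
      = @algebraMap ℂ (StrongDual ℂ X →L[ℂ] StrongDual ℂ X) _ ContinuousLinearMap.semiring _ z - dualOp T := by
  ext f y
  simp [dualOp, Algebra.algebraMap_eq_smul_one, map_sub]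

lemma dualOp_spectrum_subset (T : X →L[ℂ] X) :
    spectrum ℂ (dualOp T) ⊆ spectrum ℂ T := by
  intro z hz
  by_contra hzT
  rw [spectrum.notMem_iff] at hzT
  apply (spectrum.notMem_iff).mpr ?_ hz
  obtain ⟨u, hu⟩ := hzT
  have hA : @algebraMap ℂ (StrongDual ℂ X →L[ℂ] StrongDual ℂ X) _ ContinuousLinearMap.semiring _ z - dualOp T
      = dualOp ↑u := by rw [hu, dualOp_algebraMap_sub]
  refine ⟨⟨_, dualOp ↑u⁻¹, ?_, ?_⟩, rfl⟩
  · rw [hA, ← dualOp_mul, u.inv_mul, dualOp_one]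
  · rw [hA, ← dualOp_mul, u.mul_inv, dualOp_one]

section Banach
variable {Y : Type*} [NormedAddCommGroup Y] [NormedSpace ℂ Y] [CompleteSpace Y]

lemma local_eq_resolvent (S : Y →L[ℂ] Y) {w : ℂ} (hw : w ∈ resolventSet ℂ S) {v y : Y}
    (h : S v - w • v = y) : v = -(resolvent S w y) := by
  have h1 : resolvent S w * (algebraMap ℂ (Y →L[ℂ] Y) w - S) = 1 :=
    Ring.inverse_mul_cancel _ hw
  have h2 : (algebraMap ℂ (Y →L[ℂ] Y) w - S) v = -y := by
    rw [← h]
    simp [Algebra.algebraMap_eq_smul_one]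
  have h3 : (resolvent S w * (algebraMap ℂ (Y →L[ℂ] Y) w - S)) v = v := by rw [h1]; rfl
  rw [ContinuousLinearMap.mul_apply, h2, map_neg] at h3
  exact h3.symm

lemma resolvent_solves (S : Y →L[ℂ] Y) {w : ℂ} (hw : w ∈ resolventSet ℂ S) (x : Y) :
    S (-(resolvent S w x)) - w • (-(resolvent S w x)) = x := by
  have h1 : (algebraMap ℂ (Y →L[ℂ] Y) w - S) * resolvent S w = 1 :=
    Ring.mul_inverse_cancel _ hw
  have h3 : ((algebraMap ℂ (Y →L[ℂ] Y) w - S) * resolvent S w) x = x := by rw [h1]; rfl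
  rw [ContinuousLinearMap.mul_apply] at h3
  simp [Algebra.algebraMap_eq_smul_one] at h3
  simp only [map_neg, smul_neg, sub_neg_eq_add]
  rw [neg_add_eq_sub]
  exact h3

lemma analytic_neg_resolvent_apply (S : Y →L[ℂ] Y) (x : Y) :
    AnalyticOnNhd ℂ (fun v => -(resolvent S v x)) (resolventSet ℂ S) := by
  apply DifferentiableOn.analyticOnNhd ?_ (spectrum.isOpen_resolventSet S)
  intro v hv
  exact (((spectrum.hasDerivAt_resolvent hv).differentiableAt.clm_apply
    (differentiableAt_const x)).neg).differentiableWithinAt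

end Banach


/-- Under the density assumption on glocal spectral subspaces of `T`, the local spectrum
of the adjoint satisfies `σ_{T*}(x) = σ(T*)` for every nonzero `x ∈ X*`. -/
theorem adjoint_localSpectrum_eq {X : Type*} [NormedAddCommGroup X] [NormedSpace ℂ X]
    [CompleteSpace X] (T : X →L[ℂ] X)
    (hdense : ∀ U : Set ℂ, RelativelyOpenInSpectrum T U →
      Dense (glocalSubspace T (closure U))) :
    ∀ x : StrongDual ℂ X, x ≠ 0 →
      localSpectrum (dualOp T) x = spectrum ℂ (dualOp T) := by
  intro x hx
  classical
  apply Set.Subset.antisymm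
  · -- local spectrum ⊆ spectrum
    intro w hw
    by_contra hws
    have hwres : w ∈ resolventSet ℂ (dualOp T) :=
      spectrum.mem_resolventSet_iff.mpr (spectrum.notMem_iff.mp hws)
    apply hw
    rw [localResolventSet, Set.mem_sUnion]
    refine ⟨resolventSet ℂ (dualOp T), ?_, hwres⟩
    rw [Set.mem_setOf_eq]
    exact ⟨spectrum.isOpen_resolventSet (𝕜 := ℂ) (dualOp T), fun v => -(resolvent (dualOp T) v x),
      analytic_neg_resolvent_apply (dualOp T) x, fun v hv => resolvent_solves (dualOp T) hv x⟩
  · -- spectrum ⊆ local spectrum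
    intro w hwspec
    by_contra hwloc
    simp only [localSpectrum, Set.mem_compl_iff, not_not] at hwloc
    have hwres : w ∈ localResolventSet (dualOp T) x := hwloc
    obtain ⟨W, ⟨hWopen, f, hfana, hfeq⟩, hwW⟩ := hwres
    obtain ⟨r, hr, hball⟩ := Metric.isOpen_iff.mp hWopen w hwW
    have hwT : w ∈ spectrum ℂ T := dualOp_spectrum_subset T hwspec
    set F := closure (spectrum ℂ T ∩ Metric.ball w (r / 2)) with hF
    have hFb : F ⊆ Metric.ball w r :=
      (closure_mono Set.inter_subset_right).trans
        (Metric.closure_ball_subset_closedBall.trans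
          (Metric.closedBall_subset_ball (by linarith)))
    have hdF : Dense (glocalSubspace T F) :=
      hdense _ ⟨⟨w, hwT, Metric.mem_ball_self (by linarith)⟩, _, Metric.isOpen_ball, rfl⟩
    have hFco : IsOpen Fᶜ := isClosed_closure.isOpen_compl
    have hfz : ∀ y ∈ glocalSubspace T F, f w y = 0 := by
      rintro y ⟨g, hgana, hgeq⟩
      set H : ℂ → ℂ := fun v => if v ∈ Metric.ball w r then f v y else x (g v) with hH
      have hagree : ∀ v ∈ Metric.ball w r, v ∈ Fᶜ → f v y = x (g v) := by
        intro v hv hv'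
        have h1 : (dualOp T) (f v) - v • f v = x := hfeq v (hball hv)
        have h2 : T (g v) - v • g v = y := hgeq v hv'
        have h3 : f v y = ((dualOp T) (f v) - v • f v) (g v) := by
          rw [← h2]
          simp [dualOp_apply, map_sub, map_smul, smul_eq_mul]
        rw [h3, h1]
      have hHd : Differentiable ℂ H := by
        intro v
        by_cases hv : v ∈ Metric.ball w r
        · have hd : DifferentiableAt ℂ (fun u => f u y) v :=
            ((hfana v (hball hv)).differentiableAt).clm_apply (differentiableAt_const y)
          apply hd.congr_of_eventuallyEq
          filter_upwards [Metric.isOpen_ball.mem_nhds hv] with u hu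
          simp only [hH]
          rw [if_pos hu]
        · have hvF : v ∈ Fᶜ := fun hvF => hv (hFb hvF)
          have hd : DifferentiableAt ℂ (fun u => x (g u)) v :=
            (differentiableAt_const x).clm_apply ((hgana v hvF).differentiableAt)
          apply hd.congr_of_eventuallyEq
          filter_upwards [hFco.mem_nhds hvF] with u hu
          by_cases hub : u ∈ Metric.ball w r
          · simp only [hH]
            rw [if_pos hub]
            exact hagree u hub hu
          · simp only [hH]
            rw [if_neg hub]
      have hb1 : ∀ᶠ v in cobounded ℂ, v ∉ Metric.ball w r := by
        have : IsBounded {v : ℂ | v ∉ Metric.ball w r}ᶜ := by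
          rw [compl_setOf]
          simpa [Metric.ball] using Metric.isBounded_ball (x := w) (r := r)
        rw [Bornology.isBounded_def, compl_compl] at this
        exact this
      have hb2 : ∀ᶠ v in cobounded ℂ, v ∈ resolventSet ℂ T := by
        filter_upwards [tendsto_norm_cobounded_atTop.eventually_gt_atTop
          (‖T‖ * ‖(1 : X →L[ℂ] X)‖)] with v hv
        exact spectrum.mem_resolventSet_of_norm_lt_mul hv
      have hHt : Tendsto H (cobounded ℂ) (𝓝 0) := by
        apply squeeze_zero_norm' (a := fun v => ‖x‖ * (‖resolvent T v‖ * ‖y‖))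
        · filter_upwards [hb1, hb2] with v hv1 hv2
          have hvF : v ∈ Fᶜ := fun hvF => hv1 (hFb hvF)
          have hgv : g v = -(resolvent T v y) := local_eq_resolvent T hv2 (hgeq v hvF)
          have : H v = x (g v) := if_neg hv1
          rw [this, hgv, map_neg, norm_neg]
          calc ‖x (resolvent T v y)‖ ≤ ‖x‖ * ‖resolvent T v y‖ := x.le_opNorm _
            _ ≤ ‖x‖ * (‖resolvent T v‖ * ‖y‖) := by
                gcongr
                exact (resolvent T v).le_opNorm y
        · have h0 : Tendsto (fun v => ‖x‖ * (‖resolvent T v‖ * ‖y‖)) (cobounded ℂ)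
              (𝓝 (‖x‖ * (‖(0 : X →L[ℂ] X)‖ * ‖y‖))) :=
            (((spectrum.resolvent_tendsto_cobounded T).norm.mul_const ‖y‖).const_mul ‖x‖)
          simpa using h0
      have hev : ∀ᶠ v in cobounded ℂ, ‖H v‖ ≤ 1 := by
        filter_upwards [hHt.eventually (Metric.ball_mem_nhds (0 : ℂ) one_pos)] with v hv
        rw [dist_zero_right] at hv
        exact hv.le
      have hrange : IsBounded (Set.range H) := by
        have hsc : IsBounded {v : ℂ | ‖H v‖ ≤ 1}ᶜ := by
          rw [Bornology.isBounded_def, compl_compl]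
          exact hev
        have hcomp : IsCompact (closure ({v : ℂ | ‖H v‖ ≤ 1}ᶜ)) := hsc.isCompact_closure
        have hsub : Set.range H ⊆ H '' closure ({v : ℂ | ‖H v‖ ≤ 1}ᶜ) ∪ Metric.closedBall 0 1 := by
          rintro _ ⟨v, rfl⟩
          by_cases h : ‖H v‖ ≤ 1
          · exact Or.inr (by simpa [Metric.mem_closedBall, dist_zero_right] using h)
          · exact Or.inl ⟨v, subset_closure h, rfl⟩
        exact (((hcomp.image hHd.continuous).isBounded).union Metric.isBounded_closedBall).subset
          hsub
      have hconst : ∀ v, H v = H w := fun v => hHd.apply_eq_apply_of_bounded hrange v w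
      have hzero : H w = 0 := by
        have hc : Tendsto (fun _ : ℂ => H w) (cobounded ℂ) (𝓝 0) := by
          have : H = fun _ : ℂ => H w := funext hconst
          rwa [← this]
        exact tendsto_nhds_unique tendsto_const_nhds hc
      have hHw : H w = f w y := by
        rw [hH]
        simp [Metric.mem_ball_self hr]
      rw [← hHw, hzero]
    have hfw : f w = 0 := by
      have h := Continuous.ext_on hdF (f w).continuous continuous_zero hfz
      ext u
      simpa using congrFun h u
    have hx0 : x = 0 := by
      have h1 := hfeq w hwW
      rw [hfw] at h1
      simpa using h1.symm
    exact hx hx0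

end
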